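/- Let ρ, r₁, …, r_{d-1} be positive reals with ρ ≤ rᵢ ≤ 1 for all i. Define E(r;ρ) = { x ∈ ℝ^d : |xᵢ| < rᵢ for 1 ≤ i ≤ d-1, dist(x + e_d, S^{d-1}) < ρ, x_d > -1 }. Then the Lebesgue measure of E(r;ρ) is comparable to ρ·∏_{i=1}^{d-1} rᵢ; that is, there exist constants c(d), C(d) > 0 depending only on d with c(d)·ρ·∏ rᵢ ≤ |E(r;ρ)| ≤ C(d)·ρ·∏ rᵢ. -/

import Mathlib

open MeasureTheory Metric Set Real

lemma infDist_unit_sphere {E : Type*} [NormedAddCommGroup E] [NormedSpace ℝ E]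
    (hne : (sphere (0:E) 1).Nonempty) (y : E) :
    Metric.infDist y (sphere (0:E) 1) = |‖y‖ - 1| := by
  apply le_antisymm
  · rcases eq_or_ne y 0 with rfl | hy
    · obtain ⟨p, hp⟩ := hne
      have h2 := Metric.infDist_le_dist_of_mem (x := (0:E)) hp
      have hp' : ‖p‖ = 1 := by simpa using hp
      rw [dist_eq_norm] at h2
      simpa [hp'] using h2
    · have hy' : ‖y‖ ≠ 0 := norm_ne_zero_iff.2 hy
      have hmem : (‖y‖⁻¹ • y) ∈ sphere (0:E) 1 := by
        simp [norm_smul, abs_of_nonneg (inv_nonneg.2 (norm_nonneg y)),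
          inv_mul_cancel₀ hy']
      have h2 := Metric.infDist_le_dist_of_mem (x := y) hmem
      refine h2.trans_eq ?_
      rw [dist_eq_norm, show y - ‖y‖⁻¹ • y = (1 - ‖y‖⁻¹) • y by module, norm_smul]
      rw [Real.norm_eq_abs, ← abs_of_nonneg (norm_nonneg y), ← abs_mul]
      congr 1
      field_simp
      rw [abs_norm]; ring
  · by_contra h
    push_neg at h
    obtain ⟨z, hz, hd⟩ := (Metric.infDist_lt_iff hne).1 h
    rw [mem_sphere_iff_norm, sub_zero] at hz
    have : |‖y‖ - 1| ≤ dist y z := by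
      calc |‖y‖ - 1| = |‖y‖ - ‖z‖| := by rw [hz]
      _ ≤ ‖y - z‖ := abs_norm_sub_norm_le _ _
      _ = dist y z := (dist_eq_norm _ _).symm
    exact absurd hd (not_lt.2 this)

lemma cont_cap (A : ℝ) : Continuous fun t : ℝ => Real.sqrt (max (A - t^2) 0) :=
  ((continuous_const.sub (continuous_pow 2)).max continuous_const).sqrt

lemma lint_sqrt_cap (A : ℝ) (hA : 0 ≤ A) :
    ∫⁻ t : ℝ, ENNReal.ofReal (Real.sqrt (max (A - t^2) 0)) = ENNReal.ofReal (π/2 * A) := by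
  set g : ℝ → ℝ := fun t => Real.sqrt (max (A - t^2) 0) with hg
  have hgc : Continuous g := cont_cap A
  have hsupp : Function.support g ⊆ Ioc (-(Real.sqrt A)) (Real.sqrt A) := by
    intro t ht
    simp only [Function.mem_support, hg] at ht
    by_contra hmem
    simp only [mem_Ioc, not_and_or, not_lt, not_le] at hmem
    have h1 : A - t^2 ≤ 0 := by
      rcases hmem with h' | h' <;>
        nlinarith [Real.sq_sqrt hA, Real.sqrt_nonneg A]
    exact ht (by simp [max_eq_right h1])
  have hcs : HasCompactSupport g := by
    apply HasCompactSupport.intro (isCompact_Icc (a := -(Real.sqrt A)) (b := Real.sqrt A))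
    intro t ht
    by_contra h
    exact ht (Ioc_subset_Icc_self (hsupp h))
  have hint : Integrable g := hgc.integrable_of_hasCompactSupport hcs
  rw [← ofReal_integral_eq_lintegral_ofReal hint
      (Filter.Eventually.of_forall fun t => Real.sqrt_nonneg _)]
  congr 1
  rw [← intervalIntegral.integral_eq_integral_of_support_subset hsupp]
  rcases eq_or_lt_of_le hA with rfl | hA'
  · simp [hg]
  · have hs : Real.sqrt A ≠ 0 := by positivity
    have h1 : ∫ x in (-1 : ℝ)..1, g (Real.sqrt A * x)
        = (Real.sqrt A)⁻¹ • ∫ x in (-(Real.sqrt A))..(Real.sqrt A), g x := by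
      rw [intervalIntegral.integral_comp_mul_left g hs]
      norm_num
    have h2 : ∫ x in (-1 : ℝ)..1, g (Real.sqrt A * x) = Real.sqrt A * (π/2) := by
      have : ∀ x ∈ uIcc (-1 : ℝ) 1, g (Real.sqrt A * x) = Real.sqrt A * Real.sqrt (1 - x^2) := by
        intro x hx
        rw [uIcc_of_le (by norm_num)] at hx
        obtain ⟨hx1, hx2⟩ := hx
        have h1x : (0:ℝ) ≤ 1 - x^2 := by nlinarith
        simp only [hg]
        rw [mul_pow, Real.sq_sqrt hA, show A - A * x^2 = A * (1 - x^2) by ring,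
          max_eq_left (by positivity), Real.sqrt_mul hA]
      rw [intervalIntegral.integral_congr this]
      rw [intervalIntegral.integral_const_mul, integral_sqrt_one_sub_sq]
    rw [eq_comm, inv_smul_eq_iff₀ hs] at h1
    rw [h1, h2, smul_eq_mul, ← mul_assoc, Real.mul_self_sqrt hA]
    ring

lemma key1D (A B : ℝ) (hBA : B ≤ A) :
    ∫⁻ t : ℝ, ENNReal.ofReal (Real.sqrt (max (A - t^2) 0) - Real.sqrt (max (B - t^2) 0))
      ≤ ENNReal.ofReal (π/2 * (A - B)) := by
  set A' := max A 0 with hA'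
  set B' := max B 0 with hB'
  have hcongr : ∀ C : ℝ, ∀ t : ℝ, max (C - t^2) 0 = max (max C 0 - t^2) 0 := by
    intro C t
    rcases le_or_gt 0 C with h | h
    · rw [max_eq_left h]
    · rw [max_eq_right h.le, max_eq_right (by nlinarith [sq_nonneg t]),
        max_eq_right (by nlinarith [sq_nonneg t])]
  have hBA' : B' ≤ A' := max_le_max hBA le_rfl
  have hmono : ∀ t : ℝ, Real.sqrt (max (B' - t^2) 0) ≤ Real.sqrt (max (A' - t^2) 0) :=
    fun t => Real.sqrt_le_sqrt (max_le_max (by linarith) le_rfl)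
  have hstep : ∀ t : ℝ,
      ENNReal.ofReal (Real.sqrt (max (A - t^2) 0) - Real.sqrt (max (B - t^2) 0))
        + ENNReal.ofReal (Real.sqrt (max (B' - t^2) 0))
      = ENNReal.ofReal (Real.sqrt (max (A' - t^2) 0)) := by
    intro t
    rw [hcongr A t, hcongr B t, ← hB', ← hA',
      ← ENNReal.ofReal_add (by linarith [hmono t]) (Real.sqrt_nonneg _)]
    congr 1
    ring
  have hmeasB : Measurable fun t : ℝ => ENNReal.ofReal (Real.sqrt (max (B' - t^2) 0)) :=
    (ENNReal.measurable_ofReal).comp (cont_cap B').measurable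
  have hB'fin : (∫⁻ t : ℝ, ENNReal.ofReal (Real.sqrt (max (B' - t^2) 0))) =
      ENNReal.ofReal (π/2 * B') := lint_sqrt_cap B' (le_max_right _ _)
  have hsum : (∫⁻ t : ℝ, ENNReal.ofReal (Real.sqrt (max (A - t^2) 0)
        - Real.sqrt (max (B - t^2) 0)))
      + (∫⁻ t : ℝ, ENNReal.ofReal (Real.sqrt (max (B' - t^2) 0)))
      = ENNReal.ofReal (π/2 * A') := by
    rw [← lintegral_add_right _ hmeasB, ← lint_sqrt_cap A' (le_max_right _ _)]
    exact lintegral_congr hstep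
  have hfin : (∫⁻ t : ℝ, ENNReal.ofReal (Real.sqrt (max (B' - t^2) 0))) ≠ ⊤ := by
    rw [hB'fin]; exact ENNReal.ofReal_ne_top
  have : (∫⁻ t : ℝ, ENNReal.ofReal (Real.sqrt (max (A - t^2) 0)
      - Real.sqrt (max (B - t^2) 0))) = ENNReal.ofReal (π/2 * A') - ENNReal.ofReal (π/2 * B') := by
    rw [← hB'fin]
    exact ENNReal.eq_sub_of_add_eq hfin hsum
  rw [this, ← ENNReal.ofReal_sub _ (by positivity)]
  apply ENNReal.ofReal_le_ofReal
  have : A' - B' ≤ A - B := by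
    rcases le_or_gt 0 B with hB | hB
    · rw [hB', max_eq_left hB, hA', max_eq_left (le_trans hB hBA)]
    · rcases le_or_gt 0 A with hA | hA
      · rw [hA', max_eq_left hA, hB', max_eq_right hB.le]; linarith
      · rw [hA', max_eq_right hA.le, hB', max_eq_right hB.le]; linarith
  nlinarith [pi_pos]

noncomputable def ellF (ρ s2 : ℝ) : ℝ :=
  Real.sqrt (max ((1+ρ)^2 - s2) 0) - Real.sqrt (max ((max (1-ρ) 0)^2 - s2) 0)

lemma ellF_facts (ρ s2 : ℝ) (hρ : 0 < ρ) (hs0 : 0 ≤ s2) (hs4 : s2 ≤ 1/4) :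
    True := trivial

set_option maxHeartbeats 2000000 in
lemma ell_bounds (ρ s2 : ℝ) (hρ : 0 < ρ) (h1 : ρ ≤ 1 ∨ s2 = 0) (hs0 : 0 ≤ s2)
    (hs4 : s2 ≤ 1/4) : 4/5 * ρ ≤ ellF ρ s2 ∧ ellF ρ s2 ≤ 5 * ρ := by
  set L := max (1-ρ) 0 with hL
  have hL0 : 0 ≤ L := le_max_right _ _
  have hL1 : L ≤ 1 := by
    rw [hL]
    rcases le_or_gt (1-ρ) 0 with h | h
    · simpa [max_eq_right h] using zero_le_one
    · rw [max_eq_left h.le]; linarith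
  have ha0 : (0:ℝ) < (1+ρ)^2 - s2 := by nlinarith
  have hamax : max ((1+ρ)^2 - s2) 0 = (1+ρ)^2 - s2 := max_eq_left ha0.le
  set sa := Real.sqrt ((1+ρ)^2 - s2) with hsa
  have hsa2 : sa^2 = (1+ρ)^2 - s2 := Real.sq_sqrt ha0.le
  have hsa0 : 0 < sa := Real.sqrt_pos.2 ha0
  have hsaup : sa ≤ 1 + ρ := by
    rw [hsa]
    calc Real.sqrt ((1+ρ)^2 - s2) ≤ Real.sqrt ((1+ρ)^2) := Real.sqrt_le_sqrt (by linarith)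
    _ = 1 + ρ := Real.sqrt_sq (by linarith)
  have hsalow : sa^2 ≥ 3/4 := by nlinarith
  set sb := Real.sqrt (max (L^2 - s2) 0) with hsb
  have hsb0 : 0 ≤ sb := Real.sqrt_nonneg _
  have hsb2 : sb^2 = max (L^2 - s2) 0 := Real.sq_sqrt (le_max_right _ _)
  have hsbL : sb ≤ L := by
    rw [hsb]
    calc Real.sqrt (max (L^2 - s2) 0) ≤ Real.sqrt (L^2) :=
      Real.sqrt_le_sqrt (max_le (by linarith) (by positivity))
    _ = L := Real.sqrt_sq hL0
  have hell : ellF ρ s2 = sa - sb := by rw [ellF, hamax]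
  rw [hell]
  rcases h1 with hρ1 | hs2
  · have hLe : L = 1 - ρ := max_eq_left (by linarith)
    rcases le_or_gt 0 (L^2 - s2) with hb | hb
    · have hsb2' : sb^2 = L^2 - s2 := by rw [hsb2, max_eq_left hb]
      have hdiff : (sa - sb) * (sa + sb) = 4 * ρ := by
        have h : sa^2 - sb^2 = 4*ρ := by rw [hsa2, hsb2', hLe]; ring
        linear_combination h
      have hsum2 : sa + sb ≤ 2 := by rw [hLe] at hsbL; linarith
      have hsumpos : 0 < sa + sb := by linarith
      have hfrac : sa - sb = 4*ρ/(sa+sb) := by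
        field_simp
        linarith [hdiff]
      have hsa45 : 4/5 ≤ sa := by nlinarith
      constructor
      · rw [hfrac, le_div_iff₀ hsumpos]; nlinarith
      · rw [hfrac, div_le_iff₀ hsumpos]; nlinarith
    · have hsb2' : sb = 0 := by
        rw [hsb, max_eq_right hb.le, Real.sqrt_zero]
      have hρhalf : 1/2 < ρ := by nlinarith [hLe ▸ hb]
      constructor
      · rw [hsb2']; nlinarith
      · rw [hsb2']; nlinarith
  · subst hs2
    have hb' : max (L^2 - (0:ℝ)) 0 = L^2 := by rw [sub_zero, max_eq_left (by positivity)]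
    have hsbL' : sb = L := by rw [hsb, hb', Real.sqrt_sq hL0]
    have hsa' : sa = 1 + ρ := by
      rw [hsa, sub_zero, Real.sqrt_sq (by linarith)]
    rw [hsbL', hsa']
    constructor <;> rcases le_or_gt ρ 1 with h | h
    · rw [hL, max_eq_left (by linarith)]; nlinarith
    · rw [hL, max_eq_right (by linarith)]; nlinarith
    · rw [hL, max_eq_left (by linarith)]; nlinarith
    · rw [hL, max_eq_right (by linarith)]; nlinarith

lemma section_eq (ρ s2 : ℝ) (hρ : 0 < ρ) (hs0 : 0 ≤ s2) :
    {x : ℝ | |Real.sqrt (x^2 + s2) - 1| < ρ ∧ 0 < x}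
      = Ioo (Real.sqrt (max ((max (1-ρ) 0)^2 - s2) 0)) (Real.sqrt (max ((1+ρ)^2 - s2) 0)) := by
  ext x
  simp only [mem_setOf_eq, mem_Ioo, abs_lt]
  constructor
  · rintro ⟨⟨h1, h2⟩, hx⟩
    constructor
    · rw [Real.sqrt_lt' hx]
      apply max_lt _ (by positivity)
      rcases le_or_gt (1-ρ) 0 with hc | hc
      · rw [max_eq_right hc]; nlinarith
      · rw [max_eq_left hc.le]
        have : 1 - ρ < Real.sqrt (x^2 + s2) := by linarith
        rw [Real.lt_sqrt hc.le] at this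
        linarith
    · have hup : Real.sqrt (x^2 + s2) < 1 + ρ := by linarith
      rw [Real.sqrt_lt' (by linarith : (0:ℝ) < 1 + ρ)] at hup
      rw [Real.lt_sqrt hx.le]
      exact lt_max_of_lt_left (by linarith)
  · rintro ⟨hlo, hhi⟩
    have hx : 0 < x := lt_of_le_of_lt (Real.sqrt_nonneg _) hlo
    rw [Real.lt_sqrt hx.le] at hhi
    have hup : x^2 < (1+ρ)^2 - s2 := by
      rcases le_or_gt ((1+ρ)^2 - s2) 0 with hc | hc
      · rw [max_eq_right hc] at hhi; nlinarith
      · rwa [max_eq_left hc.le] at hhi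
    have h2 : Real.sqrt (x^2 + s2) < 1 + ρ := by
      rw [Real.sqrt_lt' (by linarith)]; linarith
    have h1 : 1 - ρ < Real.sqrt (x^2 + s2) := by
      rcases le_or_gt (1-ρ) 0 with hc | hc
      · calc 1 - ρ ≤ 0 := hc
        _ < x := hx
        _ = Real.sqrt (x^2) := (Real.sqrt_sq hx.le).symm
        _ ≤ Real.sqrt (x^2 + s2) := Real.sqrt_le_sqrt (by linarith)
      · rw [Real.lt_sqrt hc.le]
        rw [Real.sqrt_lt' hx] at hlo
        have : (max (1-ρ) 0)^2 - s2 < x^2 := lt_of_le_of_lt (le_max_left _ _) hlo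
        rw [max_eq_left hc.le] at this
        linarith
  
    exact ⟨⟨by linarith, by linarith⟩, hx⟩

/-- The curved box `E(r;ρ)`: a `ρ`-thin neighborhood of a cap of the sphere centered at
`-e_d`, restricted to the box `|xᵢ| < rᵢ` in the first `d-1` coordinates.  Here `d = n+1`. -/
def curvedBoxE (n : ℕ) (r : Fin n → ℝ) (ρ : ℝ) : Set (EuclideanSpace ℝ (Fin (n + 1))) :=
  {x | (∀ i : Fin n, |x i.castSucc| < r i) ∧
    Metric.infDist (x + EuclideanSpace.single (Fin.last n) (1 : ℝ))
      (Metric.sphere (0 : EuclideanSpace ℝ (Fin (n + 1))) 1) < ρ ∧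
    -1 < x (Fin.last n)}

def boxSet (n : ℕ) (r : Fin n → ℝ) : Set (Fin n → ℝ) :=
  Set.pi Set.univ fun i => Ioo (-(r i)) (r i)

lemma boxSet_meas (n : ℕ) (r : Fin n → ℝ) : MeasurableSet (boxSet n r) :=
  MeasurableSet.univ_pi fun _ => measurableSet_Ioo

lemma mem_boxSet {n : ℕ} {r : Fin n → ℝ} {w : Fin n → ℝ} :
    w ∈ boxSet n r ↔ ∀ i, |w i| < r i := by
  simp [boxSet, abs_lt, and_comm]

lemma vol_eq (n : ℕ) (r : Fin n → ℝ) (ρ : ℝ) (hρ : 0 < ρ) :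
    volume (curvedBoxE n r ρ)
      = ∫⁻ w : Fin n → ℝ, (boxSet n r).indicator
          (fun w => ENNReal.ofReal (ellF ρ (∑ i, (w i)^2))) w := by
  classical
  set e : EuclideanSpace ℝ (Fin (n+1)) := EuclideanSpace.single (Fin.last n) (1:ℝ) with he
  set F : Set (EuclideanSpace ℝ (Fin (n+1))) :=
    {y | (∀ i : Fin n, |y i.castSucc| < r i) ∧ |‖y‖ - 1| < ρ ∧ 0 < y (Fin.last n)} with hF
  -- step 1: translation
  have hsph : (Metric.sphere (0 : EuclideanSpace ℝ (Fin (n+1))) 1).Nonempty := by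
    refine ⟨EuclideanSpace.single 0 (1:ℝ), ?_⟩
    simp [EuclideanSpace.norm_single]
  have hEF : curvedBoxE n r ρ = (fun x => x + e) ⁻¹' F := by
    ext x
    simp only [curvedBoxE, mem_setOf_eq, mem_preimage, hF, ← he]
    rw [infDist_unit_sphere hsph]
    have h1 : ∀ i : Fin n, (x + e) i.castSucc = x i.castSucc := by
      intro i
      have : e i.castSucc = 0 := by
        rw [he, EuclideanSpace.single_apply, if_neg (Fin.castSucc_lt_last i).ne]
      simp [this]
    have h2 : (x + e) (Fin.last n) = x (Fin.last n) + 1 := by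
      rw [he]
      simp [EuclideanSpace.single_apply]
    constructor
    · rintro ⟨ha, hb, hc⟩
      exact ⟨fun i => by rw [h1 i]; exact ha i, hb, by rw [h2]; linarith⟩
    · rintro ⟨ha, hb, hc⟩
      rw [h2] at hc
      exact ⟨fun i => by rw [← h1 i]; exact ha i, hb, by linarith⟩
  -- step 2: to pi space
  set S : Set (Fin (n+1) → ℝ) :=
    {u | (∀ i : Fin n, |u i.castSucc| < r i) ∧
      |Real.sqrt (∑ i, (u i)^2) - 1| < ρ ∧ 0 < u (Fin.last n)} with hSdef
  have hS : MeasurableSet S := by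
    rw [hSdef, Set.setOf_and, Set.setOf_and]
    apply MeasurableSet.inter
    · rw [Set.setOf_forall]
      exact MeasurableSet.iInter fun i =>
        measurableSet_lt ((measurable_pi_apply _).abs) measurable_const
    apply MeasurableSet.inter
    · exact measurableSet_lt
        ((Measurable.sub (Measurable.sqrt (Finset.measurable_sum _ fun i _ =>
          (measurable_pi_apply i).pow_const 2)) measurable_const).abs) measurable_const
    · exact measurableSet_lt measurable_const (measurable_pi_apply _)
  have hFS : F = (MeasurableEquiv.toLp 2 (Fin (n+1) → ℝ)).symm ⁻¹' S := by
    ext y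
    simp only [hF, mem_setOf_eq, mem_preimage, hSdef]
    have hnorm : ‖y‖ = Real.sqrt (∑ i, (y i)^2) := by
      rw [EuclideanSpace.norm_eq]
      congr 1
      refine Finset.sum_congr rfl fun i _ => ?_
      rw [Real.norm_eq_abs, sq_abs]
    have happ : ∀ i, (MeasurableEquiv.toLp 2 (Fin (n+1) → ℝ)).symm y i = y i := fun _ => rfl
    rw [hnorm]
    tauto
  -- step 3: split off last coordinate
  set T : Set (ℝ × (Fin n → ℝ)) :=
    {q | (∀ i : Fin n, |q.2 i| < r i) ∧
      |Real.sqrt (q.1^2 + ∑ i, (q.2 i)^2) - 1| < ρ ∧ 0 < q.1} with hTdef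
  have hT : MeasurableSet T := by
    rw [hTdef, Set.setOf_and, Set.setOf_and]
    apply MeasurableSet.inter
    · rw [Set.setOf_forall]
      refine MeasurableSet.iInter fun i => measurableSet_lt ?_ measurable_const
      exact Measurable.abs (fun s hs => ((measurable_pi_apply i).comp measurable_snd) hs)
    apply MeasurableSet.inter
    · refine measurableSet_lt (Measurable.abs (Measurable.sub (Measurable.sqrt ?_)
        measurable_const)) measurable_const
      exact (measurable_fst.pow_const 2).add ((Finset.measurable_sum _ fun i _ =>
        (measurable_pi_apply i).pow_const 2).comp measurable_snd)
    · exact measurableSet_lt measurable_const measurable_fst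
  have hST : S = (MeasurableEquiv.piFinSuccAbove (fun _ : Fin (n+1) => ℝ) (Fin.last n)) ⁻¹' T := by
    ext u
    have h1 : ∀ j : Fin n,
        ((MeasurableEquiv.piFinSuccAbove (fun _ : Fin (n+1) => ℝ) (Fin.last n)) u).2 j
          = u j.castSucc := by
      intro j
      simp [MeasurableEquiv.piFinSuccAbove, Fin.insertNthEquiv, Fin.removeNth,
        Fin.succAbove_last, Fin.init]
    have h2 : ((MeasurableEquiv.piFinSuccAbove (fun _ : Fin (n+1) => ℝ) (Fin.last n)) u).1
        = u (Fin.last n) := by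
      simp [MeasurableEquiv.piFinSuccAbove, Fin.insertNthEquiv]
    simp only [hSdef, mem_setOf_eq, mem_preimage, hTdef, h1, h2]
    have hsum : ∑ i : Fin (n+1), (u i)^2
        = (u (Fin.last n))^2 + ∑ j : Fin n, (u j.castSucc)^2 := by
      rw [Fin.sum_univ_castSucc]
      ring
    rw [hsum]
  -- combine measure equalities
  have hv1 : volume (curvedBoxE n r ρ) = volume T := by
    rw [hEF, measure_preimage_add_right volume e F, hFS,
      (EuclideanSpace.volume_preserving_symm_measurableEquiv_toLp (Fin (n+1))).measure_preimage
        hS.nullMeasurableSet, hST]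
    rw [show (volume : Measure (Fin (n+1) → ℝ)) = Measure.pi fun _ => volume from volume_pi]
    rw [(measurePreserving_piFinSuccAbove (fun _ : Fin (n+1) => (volume : Measure ℝ))
      (Fin.last n)).measure_preimage hT.nullMeasurableSet]
    rw [show ((volume : Measure ℝ).prod (Measure.pi fun _ : Fin n => (volume : Measure ℝ)))
        = volume from by rw [← volume_pi, ← MeasureTheory.Measure.volume_eq_prod]]
  -- step 4: Fubini
  rw [hv1, MeasureTheory.Measure.volume_eq_prod, Measure.prod_apply_symm hT]
  refine lintegral_congr fun w => ?_
  have hsect : (fun x => (x, w)) ⁻¹' T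
      = {x : ℝ | (∀ i : Fin n, |w i| < r i) ∧
          (|Real.sqrt (x^2 + ∑ i, (w i)^2) - 1| < ρ ∧ 0 < x)} := by
    ext x; simp [hTdef, and_assoc]
  by_cases hw : w ∈ boxSet n r
  · rw [indicator_of_mem hw]
    have hw' : ∀ i, |w i| < r i := mem_boxSet.1 hw
    have : (fun x => (x, w)) ⁻¹' T
        = {x : ℝ | |Real.sqrt (x^2 + ∑ i, (w i)^2) - 1| < ρ ∧ 0 < x} := by
      rw [hsect]; ext x; simp only [mem_setOf_eq]; tauto
    rw [this, section_eq ρ _ hρ (by positivity), Real.volume_Ioo, ellF]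
  · rw [indicator_of_notMem hw]
    have : (fun x => (x, w)) ⁻¹' T = ∅ := by
      rw [hsect]
      ext x
      simp only [mem_setOf_eq, mem_empty_iff_false, iff_false, not_and]
      intro h
      exact absurd (mem_boxSet.2 h) hw
    rw [this, measure_empty]

lemma boxSet_volume (n : ℕ) (r : Fin n → ℝ) (hr : ∀ i, 0 ≤ r i) :
    volume (boxSet n r) = ENNReal.ofReal (∏ i, (2 * r i)) := by
  rw [boxSet, volume_pi_pi]
  calc ∏ i, volume (Ioo (-(r i)) (r i)) = ∏ i, ENNReal.ofReal (2 * r i) :=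
        Finset.prod_congr rfl fun i _ => by rw [Real.volume_Ioo]; congr 1; ring
  _ = ENNReal.ofReal (∏ i, (2 * r i)) :=
        (ENNReal.ofReal_prod_of_nonneg (fun i _ => by have := hr i; positivity)).symm

lemma sum_sq_zero_of_n_eq_zero {n : ℕ} (hn : n = 0) (w : Fin n → ℝ) :
    ∑ i, (w i)^2 = 0 :=
  Finset.sum_eq_zero fun i _ => absurd i.isLt (by omega)

lemma lower_est (n : ℕ) (r : Fin n → ℝ) (ρ : ℝ) (hρ : 0 < ρ) (hr : ∀ i, ρ ≤ r i ∧ r i ≤ 1)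
    (h1 : ρ ≤ 1 ∨ n = 0) :
    ENNReal.ofReal ((4/5 * (1/((n:ℝ)+1))^n) * (ρ * ∏ i, r i))
      ≤ ∫⁻ w : Fin n → ℝ,
          (boxSet n r).indicator (fun w => ENNReal.ofReal (ellF ρ (∑ i, (w i)^2))) w := by
  classical
  set N : ℝ := (n : ℝ) with hN
  have hN0 : 0 ≤ N := by positivity
  set t : Fin n → ℝ := fun i => r i / (2*(N+1)) with ht
  have htpos : ∀ i, 0 < t i := fun i => by
    have := (hr i).1
    have : 0 < r i := lt_of_lt_of_le hρ this
    rw [ht]; positivity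
  have hts : ∀ i, t i ≤ 1/(2*(N+1)) := fun i => by
    rw [ht, div_le_div_iff₀ (by positivity) (by positivity)]
    nlinarith [(hr i).2]
  have htr : ∀ i, t i ≤ r i := fun i => by
    rw [ht, div_le_iff₀ (by positivity)]
    nlinarith [(htpos i), (hr i).1, hρ]
  -- pointwise bound
  have hpt : ∀ w : Fin n → ℝ,
      (boxSet n t).indicator (fun _ => ENNReal.ofReal (4/5*ρ)) w
        ≤ (boxSet n r).indicator (fun w => ENNReal.ofReal (ellF ρ (∑ i, (w i)^2))) w := by
    intro w
    by_cases hw : w ∈ boxSet n t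
    · have hwr : w ∈ boxSet n r := mem_boxSet.2 fun i =>
        lt_of_lt_of_le (mem_boxSet.1 hw i) (htr i)
      rw [indicator_of_mem hw, indicator_of_mem hwr]
      apply ENNReal.ofReal_le_ofReal
      have hs0 : 0 ≤ ∑ i, (w i)^2 := by positivity
      have hs4 : ∑ i, (w i)^2 ≤ 1/4 := by
        have hb : ∀ i : Fin n, (w i)^2 ≤ (1/(2*(N+1)))^2 := by
          intro i
          rw [← sq_abs]
          apply pow_le_pow_left₀ (abs_nonneg _)
          exact le_trans (mem_boxSet.1 hw i).le (hts i)
        calc ∑ i, (w i)^2 ≤ ∑ _i : Fin n, (1/(2*(N+1)))^2 := Finset.sum_le_sum fun i _ => hb i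
        _ = N * (1/(2*(N+1)))^2 := by
          rw [Finset.sum_const, Finset.card_univ, Fintype.card_fin, nsmul_eq_mul, hN]
        _ = N / (4*(N+1)^2) := by rw [div_pow, one_pow, mul_one_div]; congr 1; ring
        _ ≤ 1/4 := by rw [div_le_iff₀ (by positivity)]; nlinarith
      have h1' : ρ ≤ 1 ∨ (∑ i, (w i)^2) = 0 := by
        rcases h1 with h | h
        · exact Or.inl h
        · exact Or.inr (sum_sq_zero_of_n_eq_zero h w)
      exact (ell_bounds ρ _ hρ h1' hs0 hs4).1
    · rw [indicator_of_notMem hw]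
      exact zero_le
  calc ENNReal.ofReal ((4/5 * (1/(N+1))^n) * (ρ * ∏ i, r i))
      = ENNReal.ofReal (4/5*ρ) * ENNReal.ofReal (∏ i, (2 * t i)) := by
        rw [← ENNReal.ofReal_mul (by positivity)]
        congr 1
        have : ∀ i ∈ Finset.univ, 2 * t i = r i * (1/(N+1)) := fun i _ => by
          rw [ht]; field_simp
        rw [Finset.prod_congr rfl this, Finset.prod_mul_distrib, Finset.prod_const,
          Finset.card_univ, Fintype.card_fin]
        ring
    _ = ∫⁻ w : Fin n → ℝ, (boxSet n t).indicator (fun _ => ENNReal.ofReal (4/5*ρ)) w := by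
        rw [lintegral_indicator_const (boxSet_meas n t),
          boxSet_volume n t (fun i => (htpos i).le)]
    _ ≤ _ := lintegral_mono hpt

lemma upperA_est (n : ℕ) (r : Fin n → ℝ) (ρ : ℝ) (hρ : 0 < ρ) (hr : ∀ i, ρ ≤ r i ∧ r i ≤ 1)
    (h1 : ρ ≤ 1 ∨ n = 0) (hsq : ∑ i, (r i)^2 ≤ 1/4) :
    (∫⁻ w : Fin n → ℝ,
        (boxSet n r).indicator (fun w => ENNReal.ofReal (ellF ρ (∑ i, (w i)^2))) w)
      ≤ ENNReal.ofReal ((20 * ((n:ℝ)+1) * 2^n) * (ρ * ∏ i, r i)) := by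
  classical
  have hrpos : ∀ i, 0 < r i := fun i => lt_of_lt_of_le hρ (hr i).1
  have hpt : ∀ w : Fin n → ℝ,
      (boxSet n r).indicator (fun w => ENNReal.ofReal (ellF ρ (∑ i, (w i)^2))) w
        ≤ (boxSet n r).indicator (fun _ => ENNReal.ofReal (5*ρ)) w := by
    intro w
    by_cases hw : w ∈ boxSet n r
    · rw [indicator_of_mem hw, indicator_of_mem hw]
      apply ENNReal.ofReal_le_ofReal
      have hs0 : 0 ≤ ∑ i, (w i)^2 := by positivity
      have hs4 : ∑ i, (w i)^2 ≤ 1/4 := by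
        refine le_trans (Finset.sum_le_sum fun i _ => ?_) hsq
        rw [← sq_abs]
        exact pow_le_pow_left₀ (abs_nonneg _) (mem_boxSet.1 hw i).le 2
      have h1' : ρ ≤ 1 ∨ (∑ i, (w i)^2) = 0 := by
        rcases h1 with h | h
        · exact Or.inl h
        · exact Or.inr (sum_sq_zero_of_n_eq_zero h w)
      exact (ell_bounds ρ _ hρ h1' hs0 hs4).2
    · rw [indicator_of_notMem hw]
      exact zero_le
  calc (∫⁻ w : Fin n → ℝ,
        (boxSet n r).indicator (fun w => ENNReal.ofReal (ellF ρ (∑ i, (w i)^2))) w)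
      ≤ ∫⁻ w : Fin n → ℝ, (boxSet n r).indicator (fun _ => ENNReal.ofReal (5*ρ)) w :=
        lintegral_mono hpt
    _ = ENNReal.ofReal (5*ρ) * ENNReal.ofReal (∏ i, (2 * r i)) := by
        rw [lintegral_indicator_const (boxSet_meas n r),
          boxSet_volume n r (fun i => (hrpos i).le)]
    _ ≤ ENNReal.ofReal ((20 * ((n:ℝ)+1) * 2^n) * (ρ * ∏ i, r i)) := by
        rw [← ENNReal.ofReal_mul (by positivity)]
        apply ENNReal.ofReal_le_ofReal
        have hprod : ∏ i, (2 * r i) = 2^n * ∏ i, r i := by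
          rw [Finset.prod_mul_distrib, Finset.prod_const, Finset.card_univ, Fintype.card_fin]
        rw [hprod]
        have hp : 0 ≤ ∏ i, r i := Finset.prod_nonneg fun i _ => (hrpos i).le
        have hn : (0:ℝ) ≤ (n:ℝ) := by positivity
        nlinarith [mul_nonneg (mul_nonneg hρ.le hp) (pow_nonneg (by norm_num : (0:ℝ) ≤ 2) n)]

lemma ellF_cont {n : ℕ} (ρ : ℝ) : Continuous fun w : Fin n → ℝ => ellF ρ (∑ i, (w i)^2) := by
  have hsum : Continuous fun w : Fin n → ℝ => ∑ i, (w i)^2 :=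
    continuous_finset_sum _ fun i _ => (continuous_apply i).pow 2
  exact (((continuous_const.sub hsum).max continuous_const).sqrt).sub
    (((continuous_const.sub hsum).max continuous_const).sqrt)

set_option maxHeartbeats 1000000 in
lemma upperB_est (m : ℕ) (r : Fin (m+1) → ℝ) (ρ : ℝ) (hρ : 0 < ρ) (hρ1 : ρ ≤ 1)
    (hr : ∀ i, ρ ≤ r i ∧ r i ≤ 1) (j : Fin (m+1)) (hj : 1/(4*((m:ℝ)+1)) < r j) :
    (∫⁻ w : Fin (m+1) → ℝ,
        (boxSet (m+1) r).indicator (fun w => ENNReal.ofReal (ellF ρ (∑ i, (w i)^2))) w)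
      ≤ ENNReal.ofReal ((20 * (((m:ℝ)+1)+1) * 2^(m+1)) * (ρ * ∏ i, r i)) := by
  classical
  have hrpos : ∀ i, 0 < r i := fun i => lt_of_lt_of_le hρ (hr i).1
  set f : (Fin (m+1) → ℝ) → ENNReal :=
    (boxSet (m+1) r).indicator (fun w => ENNReal.ofReal (ellF ρ (∑ i, (w i)^2))) with hf
  have hfmeas : Measurable f :=
    Measurable.indicator (ENNReal.measurable_ofReal.comp (ellF_cont ρ).measurable)
      (boxSet_meas (m+1) r)
  set e2 := MeasurableEquiv.piFinSuccAbove (fun _ : Fin (m+1) => ℝ) j with he2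
  have hp2 := measurePreserving_piFinSuccAbove (fun _ : Fin (m+1) => (volume : Measure ℝ)) j
  have hins : ∀ (t : ℝ) (v : Fin m → ℝ), e2.symm (t, v) = j.insertNth t v := by
    intro t v
    simp [he2, MeasurableEquiv.piFinSuccAbove, Fin.insertNthEquiv]
  set rv : Fin m → ℝ := fun k => r (j.succAbove k) with hrv
  have hinner : ∀ v : Fin m → ℝ,
      (∫⁻ t : ℝ, f (e2.symm (t, v)))
        ≤ (boxSet m rv).indicator (fun _ => ENNReal.ofReal (2*π*ρ)) v := by
    intro v
    set σ2 : ℝ := ∑ k, (v k)^2 with hσ2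
    set A : ℝ := (1+ρ)^2 - σ2 with hA
    set B : ℝ := (max (1-ρ) 0)^2 - σ2 with hB
    have hsum : ∀ t : ℝ, ∑ i, (j.insertNth t v i)^2 = t^2 + σ2 := by
      intro t
      set u : Fin (m+1) → ℝ := j.insertNth t v with hu
      rw [Fin.sum_univ_succAbove (fun i => (u i)^2) j]
      simp [hu, Fin.insertNth_apply_same, Fin.insertNth_apply_succAbove, hσ2]
    by_cases hv : v ∈ boxSet m rv
    · rw [indicator_of_mem hv]
      have hBA : B ≤ A := by
        rw [hA, hB]
        have h1 : max (1-ρ) 0 ≤ 1+ρ := max_le (by linarith) (by linarith)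
        have h2 : (max (1-ρ) 0)^2 ≤ (1+ρ)^2 :=
          pow_le_pow_left₀ (le_max_right _ _) h1 2
        linarith
      calc (∫⁻ t : ℝ, f (e2.symm (t, v)))
          ≤ ∫⁻ t : ℝ, ENNReal.ofReal
              (Real.sqrt (max (A - t^2) 0) - Real.sqrt (max (B - t^2) 0)) := by
            apply lintegral_mono
            intro t
            show f (e2.symm (t, v)) ≤ ENNReal.ofReal
              (Real.sqrt (max (A - t^2) 0) - Real.sqrt (max (B - t^2) 0))
            rw [hins t v, hf]
            by_cases hu : j.insertNth t v ∈ boxSet (m+1) r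
            · rw [indicator_of_mem hu]
              apply le_of_eq
              rw [hsum t, ellF]
              rw [show (1+ρ)^2 - (t^2 + σ2) = A - t^2 by rw [hA]; ring,
                show (max (1-ρ) 0)^2 - (t^2 + σ2) = B - t^2 by rw [hB]; ring]
            · rw [indicator_of_notMem hu]
              exact zero_le
        _ ≤ ENNReal.ofReal (π/2 * (A - B)) := key1D A B hBA
        _ = ENNReal.ofReal (2*π*ρ) := by
            congr 1
            rw [hA, hB, max_eq_left (by linarith : (0:ℝ) ≤ 1-ρ)]
            ring
    · rw [indicator_of_notMem hv]
      have hzero : ∀ t : ℝ, f (e2.symm (t, v)) = 0 := by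
        intro t
        rw [hins t v, hf, indicator_of_notMem]
        intro hu
        apply hv
        refine mem_boxSet.2 fun k => ?_
        have := mem_boxSet.1 hu (j.succAbove k)
        rwa [Fin.insertNth_apply_succAbove] at this
      rw [lintegral_congr hzero, lintegral_zero]
  calc (∫⁻ w : Fin (m+1) → ℝ, f w)
      = ∫⁻ w : Fin (m+1) → ℝ, f w ∂(Measure.pi fun _ => volume) := by rw [← volume_pi]
    _ = ∫⁻ q : ℝ × (Fin m → ℝ), f (e2.symm q)
          ∂((volume : Measure ℝ).prod (Measure.pi fun _ : Fin m => volume)) :=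
        ((hp2.symm e2).lintegral_comp hfmeas).symm
    _ = ∫⁻ v : Fin m → ℝ, (∫⁻ t : ℝ, f (e2.symm (t, v)))
          ∂(Measure.pi fun _ : Fin m => volume) :=
        lintegral_prod_symm _ (hfmeas.comp e2.symm.measurable).aemeasurable
    _ ≤ ∫⁻ v : Fin m → ℝ, (boxSet m rv).indicator (fun _ => ENNReal.ofReal (2*π*ρ)) v
          ∂(Measure.pi fun _ : Fin m => volume) := lintegral_mono hinner
    _ = ENNReal.ofReal (2*π*ρ) * volume (boxSet m rv) := by
        rw [← volume_pi, lintegral_indicator_const (boxSet_meas m rv)]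
    _ = ENNReal.ofReal ((2*π*ρ) * ∏ k, (2 * rv k)) := by
        rw [boxSet_volume m rv (fun k => (hrpos _).le),
          ← ENNReal.ofReal_mul (by positivity)]
    _ ≤ ENNReal.ofReal ((20 * (((m:ℝ)+1)+1) * 2^(m+1)) * (ρ * ∏ i, r i)) := by
        apply ENNReal.ofReal_le_ofReal
        have hsplit : ∏ i, r i = r j * ∏ k, rv k := Fin.prod_univ_succAbove r j
        have hX0 : 0 ≤ ∏ k, rv k := Finset.prod_nonneg fun k _ => (hrpos _).le
        have h2m : ∏ k, (2 * rv k) = 2^m * ∏ k, rv k := by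
          rw [Finset.prod_mul_distrib, Finset.prod_const, Finset.card_univ, Fintype.card_fin]
        have hj' : 1 < 4*((m:ℝ)+1)*(r j) := by
          rw [div_lt_iff₀ (by positivity)] at hj
          nlinarith [hj]
        have hkey : 2*π ≤ 40*(((m:ℝ)+1)+1)*(r j) := by
          nlinarith [Real.pi_le_four, hrpos j, (Nat.cast_nonneg m : (0:ℝ) ≤ (m:ℝ))]
        rw [h2m, hsplit]
        have hrest : (0:ℝ) ≤ ρ * (2^m * ∏ k, rv k) := by positivity
        calc 2*π*ρ * (2^m * ∏ k, rv k) = (2*π) * (ρ * (2^m * ∏ k, rv k)) := by ring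
          _ ≤ (40*(((m:ℝ)+1)+1)*(r j)) * (ρ * (2^m * ∏ k, rv k)) :=
              mul_le_mul_of_nonneg_right hkey hrest
          _ = 20 * (((m:ℝ)+1)+1) * 2^(m+1) * (ρ * (r j * ∏ k, rv k)) := by ring

/-- `|E(r;ρ)| ∼ ρ·∏ rᵢ`, with constants depending only on the dimension. -/
theorem stmt_2 (n : ℕ) :
    ∃ c C : ℝ, 0 < c ∧ 0 < C ∧
      ∀ (ρ : ℝ) (r : Fin n → ℝ), 0 < ρ → (∀ i, ρ ≤ r i ∧ r i ≤ 1) →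
        ENNReal.ofReal (c * (ρ * ∏ i, r i)) ≤ volume (curvedBoxE n r ρ) ∧
        volume (curvedBoxE n r ρ) ≤ ENNReal.ofReal (C * (ρ * ∏ i, r i)) := by
  classical
  refine ⟨4/5 * (1/((n:ℝ)+1))^n, 20 * ((n:ℝ)+1) * 2^n, by positivity, by positivity, ?_⟩
  intro ρ r hρ hr
  have h1 : ρ ≤ 1 ∨ n = 0 := by
    rcases Nat.eq_zero_or_pos n with h | h
    · exact Or.inr h
    · exact Or.inl (le_trans (hr ⟨0, h⟩).1 (hr ⟨0, h⟩).2)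
  rw [vol_eq n r ρ hρ]
  constructor
  · exact lower_est n r ρ hρ hr h1
  · by_cases hsq : ∑ i, (r i)^2 ≤ 1/4
    · exact upperA_est n r ρ hρ hr h1 hsq
    · push_neg at hsq
      have hn : n ≠ 0 := by
        intro h
        rw [sum_sq_zero_of_n_eq_zero h r] at hsq
        linarith
      obtain ⟨m, rfl⟩ : ∃ m, n = m + 1 := ⟨n - 1, by omega⟩
      have hex : ∃ j : Fin (m+1), 1/(4*((m:ℝ)+1)) < (r j)^2 := by
        by_contra hc
        push_neg at hc
        have hle : ∑ i, (r i)^2 ≤ ∑ _i : Fin (m+1), 1/(4*((m:ℝ)+1)) :=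
          Finset.sum_le_sum fun i _ => hc i
        rw [Finset.sum_const, Finset.card_univ, Fintype.card_fin, nsmul_eq_mul] at hle
        have hm : ((m+1 : ℕ) : ℝ) * (1/(4*((m:ℝ)+1))) = 1/4 := by
          push_cast
          field_simp
        linarith
      obtain ⟨j, hj2⟩ := hex
      have hrj : 0 < r j := lt_of_lt_of_le hρ (hr j).1
      have hj : 1/(4*((m:ℝ)+1)) < r j := by
        nlinarith [(hr j).2, hrj, hj2]
      have hρ1 : ρ ≤ 1 := le_trans (hr j).1 (hr j).2
      have hres := upperB_est m r ρ hρ hρ1 hr j hj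
      have hcast : ((m+1 : ℕ) : ℝ) = (m:ℝ)+1 := by push_cast; ring
      rw [hcast]
      exact hres
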